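/- The set K_k([0,1]^d) of nonempty compact subsets of [0,1]^d that intersect every k-dimensional affine subspace meeting [0,1]^d is a closed subset of the space of nonempty compact subsets of [0,1]^d equipped with the Hausdorff metric. -/

import Mathlib

open Set Module TopologicalSpace

/-- The unit cube `[0,1]^d`. -/
def unitCube (d : ℕ) : Set (EuclideanSpace ℝ (Fin d)) :=
  {x | ∀ i, x i ∈ Set.Icc (0 : ℝ) 1}

/-- The unit cube as a (metric) space. -/
abbrev Cube (d : ℕ) := {x : EuclideanSpace ℝ (Fin d) // x ∈ unitCube d}

lemma isCompact_unitCube (d : ℕ) : IsCompact (unitCube d) := by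
  have h : IsCompact (Set.univ.pi fun _ : Fin d => Set.Icc (0 : ℝ) 1) :=
    isCompact_univ_pi fun _ => isCompact_Icc
  have heq : unitCube d =
      (EuclideanSpace.equiv (Fin d) ℝ).toHomeomorph ⁻¹'
        (Set.univ.pi fun _ : Fin d => Set.Icc (0 : ℝ) 1) := by
    ext x
    simp only [Set.mem_preimage, Set.mem_pi, Set.mem_univ, true_implies]
    exact Iff.rfl
  rw [heq]
  exact (EuclideanSpace.equiv (Fin d) ℝ).toHomeomorph.isCompact_preimage.mpr h

instance cubeCompact (d : ℕ) : CompactSpace (Cube d) :=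
  isCompact_iff_compactSpace.mp (isCompact_unitCube d)

/-- `𝒦_k([0,1]^d)`: the nonempty compact subsets of `[0,1]^d` intersecting every
`k`-dimensional affine subspace that meets `[0,1]^d` form a closed subset of the
space of nonempty compact subsets of `[0,1]^d` with the Hausdorff metric. -/
theorem isClosed_Kk (d k : ℕ) (hd : 1 ≤ d) (hk : k < d) :
    IsClosed {K : NonemptyCompacts (Cube d) |
      ∀ V : AffineSubspace ℝ (EuclideanSpace ℝ (Fin d)), V ≠ ⊥ →
        finrank ℝ V.direction = k →
        ((V : Set (EuclideanSpace ℝ (Fin d))) ∩ unitCube d).Nonempty →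
        ∃ p ∈ (K : Set (Cube d)), (p : EuclideanSpace ℝ (Fin d)) ∈ V} := by
  apply IsSeqClosed.isClosed
  intro f K hf hconv V hV hrank hmeet
  -- pick points p n ∈ f n lying on V
  choose p hpK hpV using fun n => hf n V hV hrank hmeet
  -- extract a convergent subsequence
  obtain ⟨x, -, φ, hφ, hx⟩ := isCompact_univ.tendsto_subseq (fun n => Set.mem_univ (p n))
  refine ⟨x, ?_, ?_⟩
  · -- x ∈ K since edist (p n) K ≤ edist (f n) K → 0
    have hne : ∀ n, EMetric.infEdist (p n : Cube d) (K : Set (Cube d)) ≤ edist (f n) K := by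
      intro n
      exact EMetric.infEdist_le_hausdorffEdist_of_mem (hpK n)
    have h0 : Filter.Tendsto (fun n => edist (f (φ n)) K) Filter.atTop (nhds 0) := by
      have : Filter.Tendsto (fun n => edist (f n) K) Filter.atTop (nhds 0) := by
        rw [← edist_self K]
        exact hconv.edist tendsto_const_nhds
      exact this.comp hφ.tendsto_atTop
    have h1 : Filter.Tendsto (fun n => EMetric.infEdist (p (φ n)) (K : Set (Cube d)))
        Filter.atTop (nhds (EMetric.infEdist x (K : Set (Cube d)))) :=
      (EMetric.continuous_infEdist.tendsto x).comp hx
    have hle : EMetric.infEdist x (K : Set (Cube d)) ≤ 0 :=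
      le_of_tendsto_of_tendsto' h1 h0 (fun n => hne (φ n))
    have : x ∈ closure (K : Set (Cube d)) :=
      EMetric.mem_closure_iff_infEdist_zero.mpr (le_antisymm hle zero_le)
    rwa [K.isCompact.isClosed.closure_eq] at this
  · -- ↑x ∈ V since the set {q : Cube d | ↑q ∈ V} is closed
    have hVc : IsClosed ((V : Set (EuclideanSpace ℝ (Fin d)))) :=
      AffineSubspace.closed_of_finiteDimensional V
    have hC : IsClosed {q : Cube d | (q : EuclideanSpace ℝ (Fin d)) ∈ V} :=
      hVc.preimage continuous_subtype_val
    exact hC.mem_of_tendsto hx (Filter.Eventually.of_forall fun n => hpV (φ n))
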